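/- Let p, p' be integers satisfying: not both are zero; if p = 0 then p' = 1 or p' = −1; if p' = 0 then p = 1; if both are nonzero then they are relatively prime; if p < 0 then 2·p'^2 > 3·p^2; and if 2·p'^2 < 3·p^2 then p > 0. Then there exists exactly one angle θ ∈ (0, π) such that p'·(1 − 3·cos²θ) = √6·p·cos θ and p'·cos θ ≥ 0. -/
import Mathlib

lemma key_real (s P P' D : ℝ) (s6 : s ^ 2 = 6) (spos : 0 < s) (hP'0 : P' ≠ 0)
    (hD2 : D ^ 2 = 6 * P ^ 2 + 12 * P' ^ 2) (hDpos : 0 < D)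
    (h4 : P < 0 → 3 * P ^ 2 < 2 * P' ^ 2) :
    ∃! c : ℝ, c ∈ Set.Ioo (-1 : ℝ) 1 ∧
      P' * (1 - 3 * c ^ 2) = s * P * c ∧ 0 ≤ P' * c := by
  have hP'sq : 0 < P' ^ 2 := by positivity
  have ht2 : (s * P * D) ^ 2 = 36 * P ^ 4 + 72 * P ^ 2 * P' ^ 2 := by
    have h : (s * P * D) ^ 2 = s ^ 2 * P ^ 2 * D ^ 2 := by ring
    rw [h, s6, hD2]; ring
  have hlt1 : -D < s * P := by
    by_contra h; push_neg at h; nlinarith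
  have hlt2 : s * P < D := by
    by_contra h; push_neg at h; nlinarith
  obtain ⟨c, hc⟩ : ∃ c : ℝ, c = (D - s * P) / (6 * P') := ⟨_, rfl⟩
  have hexp : 6 * P' * c = D - s * P := by rw [hc]; field_simp
  have h12 : 12 * P' * (P' * (1 - 3 * c ^ 2)) = 12 * P' * (s * P * c) := by
    linear_combination (-(6 * P' * c) - D - s * P) * hexp - hD2 + P ^ 2 * s6
  have heqc : P' * (1 - 3 * c ^ 2) = s * P * c :=
    mul_left_cancel₀ (mul_ne_zero (by norm_num) hP'0) h12
  have hsign : P' * c = (D - s * P) / 6 := by linear_combination hexp / 6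
  have hsignpos : 0 < P' * c := by rw [hsign]; linarith
  have hmem : c ∈ Set.Ioo (-1 : ℝ) 1 := by
    have key : 6 * P ^ 2 - 12 * P' ^ 2 < s * P * D := by
      rcases lt_trichotomy P 0 with hP | hP | hP
      · have h4' := h4 hP
        by_contra h; push_neg at h
        have hAneg : 6 * P ^ 2 - 12 * P' ^ 2 < 0 := by nlinarith
        have hsq : (6 * P ^ 2 - 12 * P' ^ 2) ^ 2 ≤ (s * P * D) ^ 2 := by nlinarith
        nlinarith
      · rw [hP]; nlinarith
      · rcases le_or_gt (6 * P ^ 2) (12 * P' ^ 2) with h | h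
        · nlinarith [mul_pos (mul_pos spos hP) hDpos]
        · by_contra hcon; push_neg at hcon
          have htpos : 0 < s * P * D := mul_pos (mul_pos spos hP) hDpos
          have hsq : (s * P * D) ^ 2 ≤ (6 * P ^ 2 - 12 * P' ^ 2) ^ 2 := by nlinarith
          nlinarith
    have h36 : (D - s * P) ^ 2 < 36 * P' ^ 2 := by nlinarith
    have hsq : c ^ 2 < 1 := by
      have he : c ^ 2 = (D - s * P) ^ 2 / (36 * P' ^ 2) := by rw [hc]; ring
      rw [he, div_lt_one (by positivity)]; linarith
    have habs := abs_lt.mp ((sq_lt_one_iff_abs_lt_one _).mp hsq)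
    exact ⟨habs.1, habs.2⟩
  refine ⟨c, ⟨hmem, heqc, le_of_lt hsignpos⟩, ?_⟩
  rintro c' ⟨_, heq', hsgn'⟩
  have hX : (6 * P' * c' + s * P - D) * (6 * P' * c' + s * P + D) = 0 := by
    linear_combination (-12 * P') * heq' + P ^ 2 * s6 - hD2
  rcases mul_eq_zero.mp hX with h | h
  · have hcc : 6 * P' * c' = 6 * P' * c := by linear_combination h - hexp
    exact mul_left_cancel₀ (mul_ne_zero (by norm_num) hP'0) hcc
  · exfalso; nlinarith

lemma key_c (p p' : ℤ)
    (h2 : p' = 0 → p = 1)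
    (h4 : p < 0 → 3 * p ^ 2 < 2 * p' ^ 2) :
    ∃! c : ℝ, c ∈ Set.Ioo (-1 : ℝ) 1 ∧
      (p' : ℝ) * (1 - 3 * c ^ 2) = Real.sqrt 6 * (p : ℝ) * c ∧
      0 ≤ (p' : ℝ) * c := by
  have s6 : Real.sqrt 6 ^ 2 = 6 := Real.sq_sqrt (by norm_num)
  have spos : 0 < Real.sqrt 6 := Real.sqrt_pos.mpr (by norm_num)
  by_cases hp' : p' = 0
  · obtain hp := h2 hp'
    subst hp'; subst hp
    refine ⟨0, ⟨by constructor <;> norm_num, by norm_num, by norm_num⟩, ?_⟩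
    rintro c' ⟨_, heq', _⟩
    push_cast at heq'
    have h0 : Real.sqrt 6 * c' = 0 := by linarith
    rcases mul_eq_zero.mp h0 with h | h
    · exact absurd h (ne_of_gt spos)
    · exact h
  · have hP'0 : (p' : ℝ) ≠ 0 := Int.cast_ne_zero.mpr hp'
    have hD2 : Real.sqrt (6 * (p:ℝ) ^ 2 + 12 * (p':ℝ) ^ 2) ^ 2
        = 6 * (p:ℝ) ^ 2 + 12 * (p':ℝ) ^ 2 := Real.sq_sqrt (by positivity)
    have hDpos : 0 < Real.sqrt (6 * (p:ℝ) ^ 2 + 12 * (p':ℝ) ^ 2) :=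
      Real.sqrt_pos.mpr (by positivity)
    exact key_real _ _ _ _ s6 spos hP'0 hD2 hDpos
      (fun hP => by exact_mod_cast h4 (by exact_mod_cast hP))

theorem reeb_orbit_angle_unique (p p' : ℤ)
    (h0 : ¬(p = 0 ∧ p' = 0))
    (h1 : p = 0 → p' = 1 ∨ p' = -1)
    (h2 : p' = 0 → p = 1)
    (h3 : p ≠ 0 → p' ≠ 0 → IsCoprime p p')
    (h4 : p < 0 → 3 * p ^ 2 < 2 * p' ^ 2)
    (h5 : 2 * p' ^ 2 < 3 * p ^ 2 → 0 < p) :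
    ∃! θ : ℝ, θ ∈ Set.Ioo 0 Real.pi ∧
      (p' : ℝ) * (1 - 3 * Real.cos θ ^ 2) = Real.sqrt 6 * (p : ℝ) * Real.cos θ ∧
      0 ≤ (p' : ℝ) * Real.cos θ := by
  obtain ⟨c, ⟨⟨hc1, hc2⟩, hceq, hcsgn⟩, hcu⟩ := key_c p p' h2 h4
  refine ⟨Real.arccos c, ?_, ?_⟩
  · have hcos : Real.cos (Real.arccos c) = c :=
      Real.cos_arccos (le_of_lt hc1) (le_of_lt hc2)
    refine ⟨⟨Real.arccos_pos.mpr hc2, lt_of_le_of_ne (Real.arccos_le_pi c)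
        (fun h => absurd (Real.arccos_eq_pi.mp h) (not_le.mpr hc1))⟩, ?_, ?_⟩
    · rw [hcos]; exact hceq
    · rw [hcos]; exact hcsgn
  · rintro θ ⟨⟨hθ1, hθ2⟩, hθeq, hθsgn⟩
    have hmem : Real.cos θ ∈ Set.Ioo (-1 : ℝ) 1 := by
      constructor
      · have := Real.strictAntiOn_cos ⟨hθ1.le, hθ2.le⟩
          ⟨Real.pi_pos.le, le_refl _⟩ hθ2
        rwa [Real.cos_pi] at this
      · have := Real.strictAntiOn_cos ⟨le_refl (0:ℝ), Real.pi_pos.le⟩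
          ⟨hθ1.le, hθ2.le⟩ hθ1
        rwa [Real.cos_zero] at this
    have hcθ : Real.cos θ = c := hcu (Real.cos θ) ⟨hmem, hθeq, hθsgn⟩
    rw [← hcθ, Real.arccos_cos hθ1.le hθ2.le]
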